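/- Let l be odd, k satisfy 2^k < l < 2^{k+1}, and let a be an integer with 2^{k+1} − l < a ≤ 2^{k+1}. Set j₂ = −l + 2(1 + 2^{k+1} − a) and C_{l,m} = A_{l, l + 2(m−1)}. Then for all m ≥ 1, ν₂(C_{l, 2^{k+1}(m−1)+a}) = ν₂(m) + l + k + 2 + ν₂((j₂+l−1)!) + ν₂((l−j₂)!). -/

import Mathlib

open Finset

/-- The 2-adic valuation of `A_{l,n}`, given by `ν₂(A_{l,n}) = l + Σ_{j=-l+1}^{l} ν₂(n+j)`. -/
noncomputable def nuA (l : ℕ) (n : ℤ) : ℕ :=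
  l + ∑ j ∈ Finset.Icc (-(l : ℤ) + 1) (l : ℤ), padicValInt 2 (n + j)

/-- For odd `l`, the 2-adic valuation of `C_{l,m} = A_{l, l + 2(m-1)}`. -/
noncomputable def nuC (l m : ℕ) : ℕ := nuA l ((l : ℤ) + 2 * ((m : ℤ) - 1))

lemma my_padic_eq {v n : ℕ} (h1 : 2 ^ v ∣ n) (h2 : ¬ 2 ^ (v + 1) ∣ n) :
    padicValNat 2 n = v := by
  have hn : n ≠ 0 := by rintro rfl; exact h2 (dvd_zero _)
  have h3 : v ≤ padicValNat 2 n := (padicValNat_dvd_iff_le hn).mp h1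
  have h4 : ¬ (v + 1 ≤ padicValNat 2 n) := fun h => h2 ((padicValNat_dvd_iff_le hn).mpr h)
  omega

lemma my_shift_add (K x t : ℕ) (hx : 2 ^ (K + 1) ∣ x) (ht : 0 < t) (ht2 : t < 2 ^ (K + 1)) :
    padicValNat 2 (x + t) = padicValNat 2 t := by
  set v := padicValNat 2 t with hv
  have hd : 2 ^ v ∣ t := pow_padicValNat_dvd
  have hnd : ¬ 2 ^ (v + 1) ∣ t := pow_succ_padicValNat_not_dvd ht.ne'
  have hvK : v + 1 ≤ K + 1 := by
    by_contra h
    exact absurd (Nat.le_of_dvd ht hd) (by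
      have : 2 ^ (K + 1) ≤ 2 ^ v := Nat.pow_le_pow_right (by norm_num) (by omega)
      omega)
  have hx1 : 2 ^ (v + 1) ∣ x := (pow_dvd_pow 2 hvK).trans hx
  refine my_padic_eq (dvd_add ((pow_dvd_pow 2 (by omega)).trans hx) hd) fun h => hnd ?_
  have := Nat.dvd_sub h hx1
  simpa using this

lemma my_shift_sub (K x t : ℕ) (hx : 2 ^ (K + 1) ∣ x) (ht : 0 < t) (ht2 : t < 2 ^ (K + 1))
    (htx : t ≤ x) : padicValNat 2 (x - t) = padicValNat 2 t := by
  set v := padicValNat 2 t with hv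
  have hd : 2 ^ v ∣ t := pow_padicValNat_dvd
  have hnd : ¬ 2 ^ (v + 1) ∣ t := pow_succ_padicValNat_not_dvd ht.ne'
  have hvK : v + 1 ≤ K + 1 := by
    by_contra h
    exact absurd (Nat.le_of_dvd ht hd) (by
      have : 2 ^ (K + 1) ≤ 2 ^ v := Nat.pow_le_pow_right (by norm_num) (by omega)
      omega)
  have hx1 : 2 ^ (v + 1) ∣ x := (pow_dvd_pow 2 hvK).trans hx
  refine my_padic_eq (Nat.dvd_sub ((pow_dvd_pow 2 (by omega)).trans hx) hd) fun h => hnd ?_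
  have := Nat.dvd_sub hx1 h
  rwa [show x - (x - t) = t by omega] at this

lemma my_fact_sum (n : ℕ) : ∑ i ∈ Finset.range n, padicValNat 2 (i + 1) = padicValNat 2 n.factorial := by
  induction n with
  | zero => simp
  | succ n ih =>
    rw [Finset.sum_range_succ, ih, Nat.factorial_succ,
      padicValNat.mul (by omega) (Nat.factorial_ne_zero n)]
    omega

lemma my_odd_fact (b : ℕ) : padicValNat 2 (2 * b + 1).factorial = padicValNat 2 (2 * b).factorial := by
  rw [Nat.factorial_succ, padicValNat.mul (by omega) (Nat.factorial_ne_zero _),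
    padicValNat.eq_zero_of_not_dvd (by omega : ¬ 2 ∣ 2 * b + 1)]
  omega


lemma my_double (b : ℕ) : padicValNat 2 (2 * b).factorial = b + padicValNat 2 b.factorial := by
  induction b with
  | zero => simp
  | succ b ih =>
    rw [show 2 * (b + 1) = (2 * b + 1) + 1 by ring, Nat.factorial_succ,
      padicValNat.mul (by omega) (Nat.factorial_ne_zero _), my_odd_fact, ih,
      show 2 * b + 1 + 1 = 2 * (b + 1) by ring,
      padicValNat.mul (by omega) (by omega), padicValNat.self (by norm_num),
      Nat.factorial_succ, padicValNat.mul (by omega) (Nat.factorial_ne_zero _)]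
    omega

lemma my_int_sum_Icc (f : ℤ → ℕ) (a : ℤ) :
    ∀ s : ℕ, ∑ j ∈ Finset.Icc a (a + s - 1), f j = ∑ i ∈ Finset.range s, f (a + i)
  | 0 => by rw [Finset.Icc_eq_empty (by omega)]; simp
  | s + 1 => by
    have h1 : Finset.Icc a (a + (s + 1 : ℕ) - 1) = insert (a + s) (Finset.Icc a (a + s - 1)) := by
      ext x; simp only [Finset.mem_Icc, Finset.mem_insert]; omega
    rw [h1, Finset.sum_insert (by simp only [Finset.mem_Icc]; omega), my_int_sum_Icc f a s,
      Finset.sum_range_succ]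
    omega

lemma my_pair (M : ℕ) (hM : 1 ≤ M) (s : ℕ) :
    ∑ i ∈ Finset.range (2 * s), padicValNat 2 (2 * M - 1 + i)
      = s + ∑ i ∈ Finset.range s, padicValNat 2 (M + i) := by
  induction s with
  | zero => simp
  | succ s ih =>
    rw [show 2 * (s + 1) = (2 * s + 1) + 1 by ring, Finset.sum_range_succ, Finset.sum_range_succ,
      ih, Finset.sum_range_succ,
      padicValNat.eq_zero_of_not_dvd (by omega : ¬ 2 ∣ 2 * M - 1 + 2 * s),
      show 2 * M - 1 + (2 * s + 1) = 2 * (M + s) by omega,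
      padicValNat.mul (by omega) (by omega), padicValNat.self (by norm_num)]
    omega
theorem nuC_terminal_second (l k : ℕ) (hl : Odd l) (hlo : 2 ^ k < l) (hhi : l < 2 ^ (k + 1))
    (a : ℕ) (ha1 : 2 ^ (k + 1) - l < a) (ha2 : a ≤ 2 ^ (k + 1)) (m : ℕ) (hm : 1 ≤ m) :
    (nuC l (2 ^ (k + 1) * (m - 1) + a) : ℤ) =
      (padicValNat 2 m : ℤ) + l + k + 2 +
        (padicValNat 2 ((-(l : ℤ) + 2 * (1 + 2 ^ (k + 1) - (a : ℤ)) + l - 1).toNat.factorial) : ℤ) +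
        (padicValNat 2 (((l : ℤ) - (-(l : ℤ) + 2 * (1 + 2 ^ (k + 1) - (a : ℤ)))).toNat.factorial) : ℤ) := by
  obtain ⟨m', rfl⟩ : ∃ m', m = m' + 1 := ⟨m - 1, by omega⟩
  have hl1 : 1 ≤ l := hl.pos
  obtain ⟨b, hb⟩ : ∃ b, b = 2 ^ (k + 1) - a := ⟨_, rfl⟩
  obtain ⟨c, hc⟩ : ∃ c, c = l - 1 - b := ⟨_, rfl⟩
  obtain ⟨N, hN⟩ : ∃ N, N = 2 ^ (k + 1) * m' := ⟨_, rfl⟩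
  have hal : 2 ^ (k + 1) < a + l := by omega
  have harg : 2 ^ (k + 1) * (m' + 1 - 1) + a = N + a := by rw [Nat.add_sub_cancel, hN]
  have hT : N + 2 ^ (k + 1) = 2 ^ (k + 1) * (m' + 1) := by rw [hN]; ring
  have hdvd : 2 ^ (k + 1) ∣ N + 2 ^ (k + 1) := ⟨m' + 1, hT⟩
  have hvT : padicValNat 2 (N + 2 ^ (k + 1)) = (k + 1) + padicValNat 2 (m' + 1) := by
    rw [hT, padicValNat.mul (by positivity) (by omega), padicValNat.prime_pow]
  have hA : ∑ j ∈ Finset.Icc (-(l : ℤ) + 1) (l : ℤ),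
        padicValInt 2 (((l : ℤ) + 2 * (((N + a : ℕ) : ℤ) - 1)) + j)
      = ∑ i ∈ Finset.range (2 * l), padicValNat 2 (2 * (N + a) - 1 + i) := by
    have h0 := my_int_sum_Icc
      (fun j => padicValInt 2 (((l : ℤ) + 2 * (((N + a : ℕ) : ℤ) - 1)) + j)) (-(l : ℤ) + 1) (2 * l)
    rw [show (-(l : ℤ) + 1) + ((2 * l : ℕ) : ℤ) - 1 = (l : ℤ) by push_cast; ring] at h0
    rw [h0]
    refine Finset.sum_congr rfl fun i hi => ?_
    rw [show (l : ℤ) + 2 * (((N + a : ℕ) : ℤ) - 1) + (-(l : ℤ) + 1 + (i : ℤ))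
        = ((2 * (N + a) - 1 + i : ℕ) : ℤ) by omega, padicValInt.of_nat]
  have hsplit : ∑ i ∈ Finset.range l, padicValNat 2 (N + a + i)
      = padicValNat 2 b.factorial
        + ((k + 1) + padicValNat 2 (m' + 1) + padicValNat 2 c.factorial) := by
    rw [show l = b + 1 + c by omega, Finset.sum_range_add, Finset.sum_range_succ]
    have e1 : ∑ i ∈ Finset.range b, padicValNat 2 (N + a + i) = padicValNat 2 b.factorial := by
      rw [← my_fact_sum b, ← Finset.sum_range_reflect (fun i => padicValNat 2 (i + 1)) b]
      refine Finset.sum_congr rfl fun i hi => ?_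
      rw [Finset.mem_range] at hi
      rw [show N + a + i = (N + 2 ^ (k + 1)) - (b - i) by omega,
        my_shift_sub k (N + 2 ^ (k + 1)) (b - i) hdvd (by omega) (by omega) (by omega)]
      congr 1
      omega
    have e2 : padicValNat 2 (N + a + b) = (k + 1) + padicValNat 2 (m' + 1) := by
      rw [show N + a + b = N + 2 ^ (k + 1) by omega]; exact hvT
    have e3 : ∑ i ∈ Finset.range c, padicValNat 2 (N + a + (b + 1 + i))
        = padicValNat 2 c.factorial := by
      rw [← my_fact_sum c]
      refine Finset.sum_congr rfl fun i hi => ?_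
      rw [Finset.mem_range] at hi
      rw [show N + a + (b + 1 + i) = (N + 2 ^ (k + 1)) + (i + 1) by omega]
      exact my_shift_add k (N + 2 ^ (k + 1)) (i + 1) hdvd (by omega) (by omega)
    rw [e1, e2, e3]; omega
  have key : nuC l (N + a) = 2 * l + (padicValNat 2 b.factorial
      + ((k + 1) + padicValNat 2 (m' + 1) + padicValNat 2 c.factorial)) := by
    rw [nuC, nuA, hA, my_pair (N + a) (by omega) l, hsplit]
    ring
  have h2 : ((2 ^ (k + 1) : ℕ) : ℤ) = (2 : ℤ) ^ (k + 1) := by push_cast; ring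
  have hE1 : (-(l : ℤ) + 2 * (1 + 2 ^ (k + 1) - (a : ℤ)) + l - 1).toNat = 2 * b + 1 := by omega
  have hE2 : ((l : ℤ) - (-(l : ℤ) + 2 * (1 + 2 ^ (k + 1) - (a : ℤ)))).toNat = 2 * c := by omega
  rw [harg, key, hE1, hE2, my_odd_fact, my_double, my_double]
  push_cast
  have hbc : b + c + 1 = l := by omega
  omega
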